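/- Suppose P̃ ∈ BM_d is an irreducible stochastic matrix on F, and there exist b ∈ (0,∞), a column vector v ∈ BI_d with v(k,i) ≥ 1 for all (k,i), and a nondecreasing differentiable concave φ : [1,∞) → (0,∞) with φ'(t) → 0 as t → ∞, such that for some M ≥ 1 and K ∈ ℤ≥0, P̃^M v ≤ v − φ∘v + b·1_K entrywise and P̃^M(K;0)e > 0 entrywise. Let B > 0 satisfy B·P̃^M(K;0)e ≥ b·e entrywise. Define φ̃(x) = (φ(1)/φ(B+1))·φ(x) for x ≥ 1, b̃ = b + B, and the column vector ṽ by ṽ(0,i) = v(0,i) and ṽ(k,i) = v(k,i) + B for k ≥ 1, i ∈ D. Then ṽ ∈ BI_d, φ̃ is a nondecreasing differentiable concave function from [1,∞) to (0,∞) with φ̃'(t) → 0, and P̃^M ṽ ≤ ṽ − φ̃∘ṽ + b̃·1_0 entrywise. -/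

import Mathlib

open Filter Set MeasureTheory
open scoped ENNReal

namespace MasuTrunc

/-- The state space `F = ℤ≥0 × {1,…,d}`. -/
abbrev S (d : ℕ) : Type := ℕ × Fin d

variable {d : ℕ}

/-- A (row-)stochastic matrix on `F`. -/
def IsStochastic (p : S d → S d → ℝ) : Prop :=
  (∀ s t, 0 ≤ p s t) ∧ ∀ s, HasSum (p s) 1

/-- Block monotonicity (`P ∈ BM_d`). -/
def BlockMonotone (p : S d → S d → ℝ) : Prop :=
  ∀ (k l : ℕ) (i j : Fin d),
    (∑' m : ℕ, p (k, i) (l + m, j)) ≤ ∑' m : ℕ, p (k + 1, i) (l + m, j)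

/-- Block-wise domination `p ≺_d q`. -/
def BlockDominated (p q : S d → S d → ℝ) : Prop :=
  ∀ (k l : ℕ) (i j : Fin d),
    (∑' m : ℕ, p (k, i) (l + m, j)) ≤ ∑' m : ℕ, q (k, i) (l + m, j)

/-- Block increasing column vectors (`f ∈ BI_d`). -/
def BlockIncreasing (v : S d → ℝ) : Prop :=
  ∀ (k : ℕ) (i : Fin d), v (k, i) ≤ v (k + 1, i)

/-- Entries of the matrix power `P^n`. -/
noncomputable def matpow (p : S d → S d → ℝ) : ℕ → S d → S d → ℝ
  | 0 => fun s t => if s = t then (1 : ℝ) else 0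
  | n + 1 => fun s t => ∑' u : S d, matpow p n s u * p u t

/-- Irreducibility of a countable-state transition matrix. -/
def ChainIrreducible (p : S d → S d → ℝ) : Prop :=
  ∀ s t : S d, ∃ n : ℕ, 0 < matpow p n s t

/-- A stationary probability vector of `p`. -/
def IsStationaryDist (p : S d → S d → ℝ) (π : S d → ℝ) : Prop :=
  (∀ s, 0 ≤ π s) ∧ HasSum π 1 ∧ ∀ t : S d, (∑' s : S d, π s * p s t) = π t

/-- `ϖ` is the stationary probability vector of the `d×d` stochastic matrix
`Ψ = Σ_m P(k;m)` (independent of `k`; taken at `k = 0`). -/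
def IsPsiStationary (p : S d → S d → ℝ) (ϖ : Fin d → ℝ) : Prop :=
  (∀ i, 0 ≤ ϖ i) ∧ (∑ i, ϖ i) = 1 ∧
    ∀ j : Fin d, (∑ i : Fin d, ϖ i * ∑' m : ℕ, p (0, i) (m, j)) = ϖ j

/-- The conditions on `φ` in the subgeometric drift condition: nondecreasing,
positive, differentiable and concave on `[1,∞)`, with `φ'(t) → 0` as `t → ∞`. -/
def GoodPhi (φ : ℝ → ℝ) : Prop :=
  MonotoneOn φ (Ici 1) ∧ (∀ t ∈ Ici (1 : ℝ), 0 < φ t) ∧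
    (∀ t ∈ Ici (1 : ℝ), DifferentiableAt ℝ φ t) ∧
    ConcaveOn ℝ (Ici 1) φ ∧ Tendsto (deriv φ) atTop (nhds 0)

/-- `H_φ(x) = ∫_1^x dy / φ(y)`. -/
noncomputable def Hphi (φ : ℝ → ℝ) (x : ℝ) : ℝ := ∫ y in (1:ℝ)..x, (φ y)⁻¹

/-- `Hinv` is the inverse function `H_φ^{-1} : [0,∞) → [1,∞)` of `H_φ`. -/
def IsHinv (φ Hinv : ℝ → ℝ) : Prop :=
  ∀ x : ℝ, 0 ≤ x → 1 ≤ Hinv x ∧ Hphi φ (Hinv x) = x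

/-- `r_φ(x) = φ(H_φ^{-1}(x))` for `x ≥ 0`, and `r_φ(x) = 0` for `x < 0`. -/
noncomputable def rphi (φ Hinv : ℝ → ℝ) (x : ℝ) : ℝ :=
  if 0 ≤ x then φ (Hinv x) else 0

/-- The drift inequality `P v ≤ v - φ∘v + b·1_0`. -/
def DriftCond (p : S d → S d → ℝ) (v : S d → ℝ) (φ : ℝ → ℝ) (b : ℝ) : Prop :=
  ∀ s : S d, (∑' t : S d, p s t * v t) ≤ v s - φ (v s) + (if s.1 = 0 then b else 0)

/-- The LC-block-augmented truncation `(n)P` of `p`. -/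
noncomputable def trunc (p : S d → S d → ℝ) (n : ℕ) : S d → S d → ℝ :=
  fun s t =>
    if t.1 < n then p s t
    else if t.1 = n then ∑' m : ℕ, p s (n + m, t.2)
    else 0

/-- Total variation distance `‖μ − η‖ = Σ_s |μ(s) − η(s)|`. -/
noncomputable def tv (μ η : S d → ℝ) : ℝ := ∑' s : S d, |μ s - η s|

/-- `hitProb p n s` is the probability, starting from `s`, that the first
return time `τ0+ = inf{ν ≥ 1 : X_ν = 0}` to level zero equals `n`. -/
noncomputable def hitProb (p : S d → S d → ℝ) : ℕ → S d → ℝ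
  | 0 => fun _ => 0
  | 1 => fun s => ∑' t : S d, if t.1 = 0 then p s t else 0
  | n + 2 => fun s => ∑' t : S d, if t.1 = 0 then 0 else p s t * hitProb p (n + 1) t


noncomputable def eQ (p : S d → S d → ℝ) : S d → S d → ℝ≥0∞ :=
  fun s t => ENNReal.ofReal (p s t)

noncomputable def eQpow (p : S d → S d → ℝ) : ℕ → S d → S d → ℝ≥0∞
  | 0 => fun s t => if s = t then 1 else 0
  | n + 1 => fun s t => ∑' u : S d, eQpow p n s u * eQ p u t

lemma eQ_row {p : S d → S d → ℝ} (hp : IsStochastic p) (s : S d) :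
    (∑' t, eQ p s t) = 1 := by
  simp only [eQ]
  rw [← ENNReal.ofReal_tsum_of_nonneg (hp.1 s) (hp.2 s).summable,
    (hp.2 s).tsum_eq, ENNReal.ofReal_one]

lemma eQpow_row {p : S d → S d → ℝ} (hp : IsStochastic p) (n : ℕ) (s : S d) :
    (∑' t, eQpow p n s t) = 1 := by
  induction n with
  | zero =>
    simp only [eQpow]
    rw [tsum_eq_single s (fun t ht => if_neg (Ne.symm ht))]
    simp
  | succ n ih =>
    simp only [eQpow]
    rw [ENNReal.tsum_comm]
    calc (∑' u, ∑' t, eQpow p n s u * eQ p u t)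
        = ∑' u, eQpow p n s u * ∑' t, eQ p u t := by
          exact tsum_congr fun u => ENNReal.tsum_mul_left
      _ = ∑' u, eQpow p n s u := by
          exact tsum_congr fun u => by rw [eQ_row hp, mul_one]
      _ = 1 := ih

lemma eQpow_le_one {p : S d → S d → ℝ} (hp : IsStochastic p) (n : ℕ) (s t : S d) :
    eQpow p n s t ≤ 1 := by
  rw [← eQpow_row hp n s]; exact ENNReal.le_tsum t

lemma eQpow_ne_top {p : S d → S d → ℝ} (hp : IsStochastic p) (n : ℕ) (s t : S d) :
    eQpow p n s t ≠ ⊤ :=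
  ne_top_of_le_ne_top ENNReal.one_ne_top (eQpow_le_one hp n s t)

lemma matpow_eq {p : S d → S d → ℝ} (hp : IsStochastic p) (n : ℕ) (s t : S d) :
    matpow p n s t = (eQpow p n s t).toReal := by
  induction n generalizing s t with
  | zero => simp only [matpow, eQpow]; split <;> simp
  | succ n ih =>
    simp only [matpow, eQpow]
    calc (∑' u, matpow p n s u * p u t)
        = ∑' u, (eQpow p n s u * eQ p u t).toReal := by
          apply tsum_congr; intro u
          rw [ENNReal.toReal_mul, ← ih]
          simp only [eQ]
          rw [ENNReal.toReal_ofReal (hp.1 u t)]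
      _ = (∑' u, eQpow p n s u * eQ p u t).toReal :=
          (ENNReal.tsum_toReal_eq
            (fun u => ENNReal.mul_ne_top (eQpow_ne_top hp n s u) ENNReal.ofReal_ne_top)).symm

lemma matpow_nonneg {p : S d → S d → ℝ} (hp : IsStochastic p) (n : ℕ) (s t : S d) :
    0 ≤ matpow p n s t := by rw [matpow_eq hp]; exact ENNReal.toReal_nonneg

lemma eQpow_succ_left {p : S d → S d → ℝ} (n : ℕ) (s t : S d) :
    eQpow p (n + 1) s t = ∑' u : S d, eQ p s u * eQpow p n u t := by
  induction n generalizing s t with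
  | zero =>
    simp only [eQpow]
    rw [tsum_eq_single s (fun u hu => by rw [if_neg (Ne.symm hu), zero_mul]),
      if_pos rfl, one_mul,
      tsum_eq_single t (fun u hu => by rw [if_neg hu, mul_zero]), if_pos rfl, mul_one]
  | succ n ih =>
    show (∑' u, eQpow p (n+1) s u * eQ p u t) = _
    calc (∑' u, eQpow p (n+1) s u * eQ p u t)
        = ∑' u, (∑' w, eQ p s w * eQpow p n w u) * eQ p u t := by
          exact tsum_congr fun u => by rw [ih]
      _ = ∑' u, ∑' w, eQ p s w * eQpow p n w u * eQ p u t := by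
          exact tsum_congr fun u => ENNReal.tsum_mul_right.symm
      _ = ∑' w, ∑' u, eQ p s w * eQpow p n w u * eQ p u t := ENNReal.tsum_comm
      _ = ∑' w, eQ p s w * ∑' u, eQpow p n w u * eQ p u t := by
          apply tsum_congr; intro w
          rw [← ENNReal.tsum_mul_left]
          exact tsum_congr fun u => by ring
      _ = ∑' w, eQ p s w * eQpow p (n+1) w t := rfl

lemma eQ_bm {p : S d → S d → ℝ} (hp : IsStochastic p) (hbm : BlockMonotone p)
    (k l : ℕ) (i j : Fin d) :
    (∑' m, eQ p (k, i) (l + m, j)) ≤ ∑' m, eQ p (k + 1, i) (l + m, j) := by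
  have hi : Function.Injective (fun m : ℕ => ((l + m, j) : S d)) :=
    fun a b h => by simpa using h
  have hs : ∀ (s : S d), Summable fun m => p s (l + m, j) := by
    intro s
    exact (hp.2 s).summable.comp_injective hi
  simp only [eQ]
  rw [← ENNReal.ofReal_tsum_of_nonneg (fun m => hp.1 _ _) (hs (k, i)),
    ← ENNReal.ofReal_tsum_of_nonneg (fun m => hp.1 _ _) (hs (k + 1, i))]
  exact ENNReal.ofReal_le_ofReal (hbm k l i j)



lemma tsum_ite_lt_aux (μ : ℕ → ℝ≥0∞) (l : ℕ) :
    (∑' n, if l < n then μ n else 0) = ∑' m, μ (l + 1 + m) := by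
  have hinj : Function.Injective (fun m : ℕ => l + 1 + m) := fun a b h => by simpa using h
  rw [← hinj.tsum_eq (f := fun n => if l < n then μ n else 0)]
  · exact tsum_congr fun m => if_pos (by omega)
  · intro n hn
    simp only [Function.mem_support, ne_eq] at hn
    by_contra hr
    simp only [Set.mem_range, not_exists] at hr
    have : ¬ l < n := by intro h; exact hr (n - (l+1)) (by omega)
    exact hn (if_neg this)

lemma abel_compare (μ ν : ℕ → ℝ≥0∞) (g : ℕ → ℝ≥0∞)
    (hg : Monotone g) (hgfin : ∀ n, g n ≠ ⊤)
    (h : ∀ l : ℕ, (∑' m, μ (l + m)) ≤ ∑' m, ν (l + m)) :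
    (∑' n, μ n * g n) ≤ ∑' n, ν n * g n := by
  have key : ∀ ρ : ℕ → ℝ≥0∞, (∑' n, ρ n * g n)
      = g 0 * (∑' m, ρ m) + ∑' l, (g (l+1) - g l) * ∑' m, ρ (l + 1 + m) := by
    intro ρ
    have hgdecomp : ∀ n, g n = g 0 + ∑ l ∈ Finset.range n, (g (l+1) - g l) := by
      intro n; induction n with
      | zero => simp
      | succ n ih =>
        rw [Finset.sum_range_succ, ← add_assoc, ← ih, add_comm (g n)]
        exact (tsub_add_cancel_of_le (hg (Nat.le_succ n))).symm
    calc (∑' n, ρ n * g n)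
        = ∑' n, (ρ n * g 0 + ∑ l ∈ Finset.range n, ρ n * (g (l+1) - g l)) := by
          apply tsum_congr; intro n
          rw [hgdecomp n, mul_add, Finset.mul_sum]
      _ = (∑' n, ρ n * g 0) + ∑' n, ∑ l ∈ Finset.range n, ρ n * (g (l+1) - g l) :=
          ENNReal.tsum_add
      _ = g 0 * (∑' m, ρ m) + ∑' l, (g (l+1) - g l) * ∑' m, ρ (l + 1 + m) := by
          congr 1
          · rw [ENNReal.tsum_mul_right, mul_comm]
          · calc (∑' n, ∑ l ∈ Finset.range n, ρ n * (g (l+1) - g l))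
                = ∑' n, ∑' l, (if l < n then ρ n * (g (l+1) - g l) else 0) := by
                  apply tsum_congr; intro n
                  rw [tsum_eq_sum (s := Finset.range n)]
                  · exact Finset.sum_congr rfl fun l hl => (if_pos (Finset.mem_range.mp hl)).symm
                  · intro l hl; simp only [Finset.mem_range] at hl; exact if_neg hl
              _ = ∑' l, ∑' n, (if l < n then ρ n * (g (l+1) - g l) else 0) :=
                  ENNReal.tsum_comm
              _ = ∑' l, (g (l+1) - g l) * ∑' m, ρ (l + 1 + m) := by
                  apply tsum_congr; intro l
                  have : ∀ n, (if l < n then ρ n * (g (l+1) - g l) else 0)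
                      = (g (l+1) - g l) * (if l < n then ρ n else 0) := by
                    intro n; split <;> simp [mul_comm]
                  simp_rw [this]
                  rw [ENNReal.tsum_mul_left, tsum_ite_lt_aux]
  rw [key μ, key ν]
  refine add_le_add (mul_le_mul_right (by simpa using h 0) _)
    (ENNReal.tsum_le_tsum fun l => mul_le_mul_right (h (l + 1)) _)

lemma tsum_S_split (f : S d → ℝ≥0∞) : (∑' t : S d, f t) = ∑ j : Fin d, ∑' n : ℕ, f (n, j) := by
  rw [ENNReal.tsum_prod (f := fun a b => f (a, b)), ENNReal.tsum_comm, tsum_fintype]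

lemma step_nice {p : S d → S d → ℝ} (hp : IsStochastic p) (hbm : BlockMonotone p)
    (g : S d → ℝ≥0∞) (hg1 : ∀ t, g t ≤ 1) (hgm : ∀ k i, g (k, i) ≤ g (k + 1, i)) :
    (∀ s, (∑' t, eQ p s t * g t) ≤ 1) ∧
      ∀ k i, (∑' t, eQ p (k, i) t * g t) ≤ ∑' t, eQ p (k + 1, i) t * g t := by
  constructor
  · intro s
    calc (∑' t, eQ p s t * g t) ≤ ∑' t, eQ p s t * 1 :=
        ENNReal.tsum_le_tsum fun t => mul_le_mul_right (hg1 t) _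
      _ = 1 := by simp only [mul_one]; exact eQ_row hp s
  · intro k i
    rw [tsum_S_split (fun t => eQ p (k, i) t * g t),
      tsum_S_split (fun t => eQ p (k + 1, i) t * g t)]
    apply Finset.sum_le_sum; intro j _
    exact abel_compare (fun n => eQ p (k, i) (n, j)) (fun n => eQ p (k + 1, i) (n, j))
      (fun n => g (n, j)) (monotone_nat_of_le_succ fun n => hgm n j)
      (fun n => ne_top_of_le_ne_top ENNReal.one_ne_top (hg1 _))
      (fun l => eQ_bm hp hbm k l i j)

lemma pow_nice {p : S d → S d → ℝ} (hp : IsStochastic p) (hbm : BlockMonotone p) :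
    ∀ (n : ℕ) (g : S d → ℝ≥0∞), (∀ t, g t ≤ 1) → (∀ k i, g (k, i) ≤ g (k + 1, i)) →
    (∀ s, (∑' t, eQpow p n s t * g t) ≤ 1) ∧
      ∀ k i, (∑' t, eQpow p n (k, i) t * g t) ≤ ∑' t, eQpow p n (k + 1, i) t * g t := by
  intro n
  induction n with
  | zero =>
    intro g hg1 hgm
    have hid : ∀ s, (∑' t, eQpow p 0 s t * g t) = g s := by
      intro s
      simp only [eQpow]
      rw [tsum_eq_single s (fun t ht => by rw [if_neg (Ne.symm ht), zero_mul]),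
        if_pos rfl, one_mul]
    refine ⟨fun s => by rw [hid]; exact hg1 s, fun k i => by rw [hid, hid]; exact hgm k i⟩
  | succ n ih =>
    intro g hg1 hgm
    have hrw : ∀ s, (∑' t, eQpow p (n + 1) s t * g t)
        = ∑' u, eQ p s u * ∑' t, eQpow p n u t * g t := by
      intro s
      calc (∑' t, eQpow p (n + 1) s t * g t)
          = ∑' t, (∑' u, eQ p s u * eQpow p n u t) * g t :=
            tsum_congr fun t => by rw [eQpow_succ_left]
        _ = ∑' t, ∑' u, eQ p s u * eQpow p n u t * g t :=
            tsum_congr fun t => ENNReal.tsum_mul_right.symm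
        _ = ∑' u, ∑' t, eQ p s u * eQpow p n u t * g t := ENNReal.tsum_comm
        _ = ∑' u, eQ p s u * ∑' t, eQpow p n u t * g t := by
            apply tsum_congr; intro u
            rw [← ENNReal.tsum_mul_left]
            exact tsum_congr fun t => by ring
    obtain ⟨h1, hm⟩ := ih g hg1 hgm
    obtain ⟨h1', hm'⟩ := step_nice hp hbm (fun u => ∑' t, eQpow p n u t * g t) h1 hm
    exact ⟨fun s => by rw [hrw]; exact h1' s,
      fun k i => by rw [hrw, hrw]; exact hm' k i⟩

lemma eW_eq {p : S d → S d → ℝ} (n : ℕ) (s : S d) :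
    (∑' t : S d, eQpow p n s t * (if t.1 = 0 then 1 else 0))
      = ∑ j : Fin d, eQpow p n s (0, j) := by
  rw [tsum_S_split (fun t => eQpow p n s t * (if t.1 = 0 then 1 else 0))]
  apply Finset.sum_congr rfl; intro j _
  rw [tsum_eq_single 0 (fun m hm => by simp [hm])]
  simp

lemma level0_antitone {p : S d → S d → ℝ} (hp : IsStochastic p) (hbm : BlockMonotone p)
    (n : ℕ) (k : ℕ) (i : Fin d) :
    (∑ j : Fin d, matpow p n (k + 1, i) (0, j)) ≤ ∑ j : Fin d, matpow p n (k, i) (0, j) := by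
  set gg : S d → ℝ≥0∞ := fun t => if t.1 = 0 then 0 else 1 with hgg
  have hg1 : ∀ t, gg t ≤ 1 := fun t => by simp only [hgg]; split <;> simp
  have hgm : ∀ k i, gg (k, i) ≤ gg (k + 1, i) := by
    intro k i; simp only [hgg]; split <;> simp
  obtain ⟨hG1, hGm⟩ := pow_nice hp hbm n gg hg1 hgm
  have hWG : ∀ s : S d, (∑' t, eQpow p n s t * (if t.1 = 0 then 1 else 0))
      + (∑' t, eQpow p n s t * gg t) = 1 := by
    intro s
    rw [← ENNReal.tsum_add]
    calc (∑' t, (eQpow p n s t * (if t.1 = 0 then 1 else 0) + eQpow p n s t * gg t))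
        = ∑' t, eQpow p n s t := by
          apply tsum_congr; intro t
          rw [← mul_add]
          simp only [hgg]
          split <;> simp
      _ = 1 := eQpow_row hp n s
  have key : (∑' t, eQpow p n (k + 1, i) t * (if t.1 = 0 then 1 else 0))
      ≤ ∑' t, eQpow p n (k, i) t * (if t.1 = 0 then 1 else 0) := by
    have hfin : (∑' t, eQpow p n (k + 1, i) t * gg t) ≠ ⊤ :=
      ne_top_of_le_ne_top ENNReal.one_ne_top (hG1 _)
    refine (ENNReal.add_le_add_iff_right hfin).mp ?_
    rw [hWG (k + 1, i)]
    calc (1 : ℝ≥0∞) = (∑' t, eQpow p n (k, i) t * (if t.1 = 0 then 1 else 0))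
          + (∑' t, eQpow p n (k, i) t * gg t) := (hWG (k, i)).symm
      _ ≤ _ := add_le_add le_rfl (hGm k i)
  rw [eW_eq, eW_eq] at key
  have h1 : ∀ (s : S d), (∑ j : Fin d, matpow p n s (0, j))
      = (∑ j : Fin d, eQpow p n s (0, j)).toReal := by
    intro s
    rw [ENNReal.toReal_sum (fun j _ => eQpow_ne_top hp n s (0, j))]
    exact Finset.sum_congr rfl fun j _ => matpow_eq hp n s _
  rw [h1, h1]
  apply ENNReal.toReal_mono _ key
  exact (ENNReal.sum_lt_top.mpr fun j _ => lt_of_le_of_lt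
    (eQpow_le_one hp n _ _) ENNReal.one_lt_top).ne

lemma level0_le {p : S d → S d → ℝ} (hp : IsStochastic p) (hbm : BlockMonotone p)
    (n : ℕ) (k K : ℕ) (hk : k ≤ K) (i : Fin d) :
    (∑ j : Fin d, matpow p n (K, i) (0, j)) ≤ ∑ j : Fin d, matpow p n (k, i) (0, j) := by
  induction K with
  | zero => simp_all
  | succ K ih =>
    rcases Nat.eq_or_lt_of_le hk with h | h
    · rw [h]
    · exact le_trans (level0_antitone hp hbm n K i) (ih (by omega))

lemma matpow_summable {p : S d → S d → ℝ} (hp : IsStochastic p) (n : ℕ) (s : S d) :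
    Summable (fun t => matpow p n s t) := by
  have : (fun t => matpow p n s t) = fun t => (eQpow p n s t).toReal :=
    funext fun t => matpow_eq hp n s t
  rw [this]
  exact ENNReal.summable_toReal (by rw [eQpow_row hp]; exact ENNReal.one_ne_top)

lemma matpow_row_sum {p : S d → S d → ℝ} (hp : IsStochastic p) (n : ℕ) (s : S d) :
    (∑' t, matpow p n s t) = 1 := by
  calc (∑' t, matpow p n s t) = ∑' t, (eQpow p n s t).toReal :=
      tsum_congr fun t => matpow_eq hp n s t
    _ = (∑' t, eQpow p n s t).toReal :=
      (ENNReal.tsum_toReal_eq (fun t => eQpow_ne_top hp n s t)).symm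
    _ = 1 := by rw [eQpow_row hp]; simp

lemma matpow_ind_sum {p : S d → S d → ℝ} (hp : IsStochastic p) (n : ℕ) (s : S d) :
    (∑' t : S d, matpow p n s t * (if t.1 = 0 then 1 else 0))
      = ∑ j : Fin d, matpow p n s (0, j) := by
  have hinj : Function.Injective (fun j : Fin d => ((0, j) : S d)) :=
    fun a b h => by simpa using h
  rw [← hinj.tsum_eq (f := fun t : S d => matpow p n s t * (if t.1 = 0 then 1 else 0))]
  · rw [tsum_fintype]
    exact Finset.sum_congr rfl fun j _ => by simp
  · intro t ht
    simp only [Function.mem_support, ne_eq] at ht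
    rcases t with ⟨m, j⟩
    rcases Nat.eq_zero_or_pos m with hm | hm
    · exact ⟨j, by simp [hm]⟩
    · exfalso; apply ht; simp [Nat.pos_iff_ne_zero.mp hm]

lemma concave_key {φ : ℝ → ℝ} (hφ : GoodPhi φ) {B : ℝ} (hB : 0 < B)
    {x : ℝ} (hx : 1 ≤ x) : φ 1 / φ (B + 1) * φ (x + B) ≤ φ x := by
  obtain ⟨hmono, hpos, _, hconc, _⟩ := hφ
  have hB1 : (1 : ℝ) ≤ B + 1 := by linarith
  have hmem1 : (1 : ℝ) ∈ Ici (1 : ℝ) := Set.self_mem_Ici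
  have hmemB1 : B + 1 ∈ Ici (1 : ℝ) := Set.mem_Ici.mpr hB1
  have hmemx : x ∈ Ici (1 : ℝ) := Set.mem_Ici.mpr hx
  have hφB1 : 0 < φ (B + 1) := hpos _ hmemB1
  have hφ1 : 0 < φ 1 := hpos _ hmem1
  have hφ1B : φ 1 ≤ φ (B + 1) := hmono hmem1 hmemB1 hB1
  have hφ1x : φ 1 ≤ φ x := hmono hmem1 hmemx hx
  have hden : 0 < x + B - 1 := by linarith
  set lam : ℝ := (x - 1) / (x + B - 1) with hlam
  have hlam0 : 0 ≤ lam := div_nonneg (by linarith) (le_of_lt hden)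
  have hlam1 : lam ≤ 1 := by rw [hlam, div_le_one hden]; linarith
  have hmemxB : x + B ∈ Ici (1 : ℝ) := Set.mem_Ici.mpr (by linarith)
  have hc1 : lam • φ 1 + (1 - lam) • φ (x + B) ≤ φ (lam • (1:ℝ) + (1 - lam) • (x + B)) :=
    hconc.2 hmem1 hmemxB hlam0 (by linarith) (by ring)
  have hc2 : (1 - lam) • φ 1 + lam • φ (x + B) ≤ φ ((1 - lam) • (1:ℝ) + lam • (x + B)) :=
    hconc.2 hmem1 hmemxB (by linarith) hlam0 (by ring)
  simp only [smul_eq_mul] at hc1 hc2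
  have he1 : lam * 1 + (1 - lam) * (x + B) = 1 + B := by
    rw [hlam]; field_simp; ring
  have he2 : (1 - lam) * 1 + lam * (x + B) = x := by
    rw [hlam]; field_simp; ring
  rw [he1] at hc1
  rw [he2] at hc2
  have hsum : φ 1 + φ (x + B) ≤ φ (1 + B) + φ x := by nlinarith
  have h1B : φ (1 + B) = φ (B + 1) := by rw [add_comm]
  rw [div_mul_eq_mul_div, div_le_iff₀ hφB1]
  nlinarith [mul_nonneg (sub_nonneg.mpr hφ1x) (sub_nonneg.mpr hφ1B)]


/-- (4.12): under the `M`-step drift condition with boundary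
set `{0,…,K} × D` for the irreducible `P̃ ∈ BM_d`, with `P̃^M(K;0)e > 0` and
`B·P̃^M(K;0)e ≥ b·e`, the modified data `φ̃(x) = (φ(1)/φ(B+1))·φ(x)`,
`b̃ = b + B`, `ṽ(0,i) = v(0,i)`, `ṽ(k,i) = v(k,i) + B` for `k ≥ 1` satisfy:
`ṽ ∈ BI_d`, `φ̃` is a nondecreasing differentiable concave function on `[1,∞)`
with values in `(0,∞)` and `φ̃'(t) → 0`, and
`P̃^M ṽ ≤ ṽ − φ̃∘ṽ + b̃·1_0`. -/
theorem modified_drift_condition {d : ℕ} (hd : 0 < d)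
    (pt : S d → S d → ℝ)
    (hpt : IsStochastic pt) (hbm : BlockMonotone pt) (hirrt : ChainIrreducible pt)
    (b : ℝ) (hb : 0 < b)
    (v : S d → ℝ) (hvbi : BlockIncreasing v) (hv1 : ∀ s, 1 ≤ v s)
    (φ : ℝ → ℝ) (hφ : GoodPhi φ)
    (M K : ℕ) (hM : 1 ≤ M)
    (hdrift : ∀ s : S d, (∑' t : S d, matpow pt M s t * v t)
        ≤ v s - φ (v s) + (if s.1 ≤ K then b else 0))
    (hKpos : ∀ i : Fin d, 0 < ∑ j : Fin d, matpow pt M (K, i) (0, j))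
    (B : ℝ) (hB : 0 < B)
    (hBb : ∀ i : Fin d, b ≤ B * ∑ j : Fin d, matpow pt M (K, i) (0, j)) :
    BlockIncreasing (fun s : S d => if s.1 = 0 then v s else v s + B) ∧
    GoodPhi (fun x : ℝ => φ 1 / φ (B + 1) * φ x) ∧
    ∀ s : S d,
      (∑' t : S d, matpow pt M s t * (if t.1 = 0 then v t else v t + B))
        ≤ (if s.1 = 0 then v s else v s + B)
          - φ 1 / φ (B + 1) * φ (if s.1 = 0 then v s else v s + B)
          + (if s.1 = 0 then b + B else 0) := by
  have hB1 : (1 : ℝ) ≤ B + 1 := by linarith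
  have hmem1 : (1 : ℝ) ∈ Ici (1 : ℝ) := Set.self_mem_Ici
  have hmemB1 : B + 1 ∈ Ici (1 : ℝ) := Set.mem_Ici.mpr hB1
  have hφ1 : 0 < φ 1 := hφ.2.1 _ hmem1
  have hφB1 : 0 < φ (B + 1) := hφ.2.1 _ hmemB1
  have hφ1B : φ 1 ≤ φ (B + 1) := hφ.1 hmem1 hmemB1 hB1
  have hcpos : 0 < φ 1 / φ (B + 1) := div_pos hφ1 hφB1
  have hcle1 : φ 1 / φ (B + 1) ≤ 1 := (div_le_one hφB1).mpr hφ1B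
  have hcphile : ∀ x : ℝ, 1 ≤ x → φ 1 / φ (B + 1) * φ x ≤ φ x := by
    intro x hx
    have hpx : 0 < φ x := hφ.2.1 _ (Set.mem_Ici.mpr hx)
    nlinarith
  refine ⟨?_, ?_, ?_⟩
  · -- BlockIncreasing
    intro k i
    have h1 := hvbi k i
    show (if (k, i).1 = 0 then v (k, i) else v (k, i) + B)
      ≤ if (k + 1, i).1 = 0 then v (k + 1, i) else v (k + 1, i) + B
    rw [if_neg (show ¬ ((k + 1, i) : S d).1 = 0 from Nat.succ_ne_zero k)]
    by_cases hk : k = 0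
    · rw [if_pos (show ((k, i) : S d).1 = 0 from hk)]
      linarith
    · rw [if_neg (show ¬ ((k, i) : S d).1 = 0 from hk)]
      linarith
  · -- GoodPhi
    obtain ⟨hmono, hpos, hdiff, hconc, htend⟩ := hφ
    refine ⟨?_, ?_, ?_, ?_, ?_⟩
    · intro a ha bb hbb hab
      exact mul_le_mul_of_nonneg_left (hmono ha hbb hab) hcpos.le
    · intro t ht; exact mul_pos hcpos (hpos t ht)
    · intro t ht; exact (hdiff t ht).const_mul _
    · simpa [smul_eq_mul] using hconc.smul hcpos.le
    · have hde : deriv (fun x => φ 1 / φ (B + 1) * φ x)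
          = fun x => φ 1 / φ (B + 1) * deriv φ x :=
        funext fun x => deriv_const_mul_field _
      rw [hde]
      simpa using htend.const_mul (φ 1 / φ (B + 1))
  · -- drift inequality
    rintro ⟨k, i⟩
    have hmnn : ∀ t, 0 ≤ matpow pt M (k, i) t := matpow_nonneg hpt M (k, i)
    have hSιK : Summable (fun t : S d =>
        matpow pt M (K, i) t * (if t.1 = 0 then (1 : ℝ) else 0)) := by
      apply Summable.of_nonneg_of_le _ _ (matpow_summable hpt M (K, i))
      · intro t; rcases eq_or_ne t.1 0 with h | h <;>
          simp [h, matpow_nonneg hpt M (K, i) t]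
      · intro t; rcases eq_or_ne t.1 0 with h | h <;>
          simp [h, matpow_nonneg hpt M (K, i) t]
    have hrKle1 : (∑ j : Fin d, matpow pt M (K, i) (0, j)) ≤ 1 := by
      have h1 : (∑' t : S d, matpow pt M (K, i) t * (if t.1 = 0 then (1 : ℝ) else 0))
          ≤ ∑' t : S d, matpow pt M (K, i) t := by
        apply Summable.tsum_le_tsum _ hSιK (matpow_summable hpt M (K, i))
        intro t; rcases eq_or_ne t.1 0 with h | h <;>
          simp [h, matpow_nonneg hpt M (K, i) t]
      rwa [matpow_ind_sum hpt M (K, i), matpow_row_sum hpt M (K, i)] at h1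
    have hbB : b ≤ B := le_trans (hBb i) (by nlinarith)
    have hvki : 1 ≤ v (k, i) := hv1 (k, i)
    have hckey : φ 1 / φ (B + 1) * φ (v (k, i) + B) ≤ φ (v (k, i)) :=
      concave_key hφ hB hvki
    have hcle : φ 1 / φ (B + 1) * φ (v (k, i)) ≤ φ (v (k, i)) := hcphile _ hvki
    by_cases hsum : Summable (fun t : S d => matpow pt M (k, i) t * v t)
    · -- summable case
      have hSι : Summable (fun t : S d =>
          matpow pt M (k, i) t * (if t.1 = 0 then (1 : ℝ) else 0)) := by
        apply Summable.of_nonneg_of_le _ _ (matpow_summable hpt M (k, i))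
        · intro t; rcases eq_or_ne t.1 0 with h | h <;> simp [h, hmnn t]
        · intro t; rcases eq_or_ne t.1 0 with h | h <;> simp [h, hmnn t]
      have hSχ : Summable (fun t : S d =>
          matpow pt M (k, i) t * (if t.1 = 0 then (0 : ℝ) else 1)) := by
        apply Summable.of_nonneg_of_le _ _ (matpow_summable hpt M (k, i))
        · intro t; rcases eq_or_ne t.1 0 with h | h <;> simp [h, hmnn t]
        · intro t; rcases eq_or_ne t.1 0 with h | h <;> simp [h, hmnn t]
      have hsplit1 : (∑' t : S d, matpow pt M (k, i) t * (if t.1 = 0 then (1 : ℝ) else 0))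
          + (∑' t : S d, matpow pt M (k, i) t * (if t.1 = 0 then (0 : ℝ) else 1)) = 1 := by
        rw [← Summable.tsum_add hSι hSχ]
        calc (∑' t : S d, (matpow pt M (k, i) t * (if t.1 = 0 then (1 : ℝ) else 0)
              + matpow pt M (k, i) t * (if t.1 = 0 then (0 : ℝ) else 1)))
            = ∑' t : S d, matpow pt M (k, i) t := by
              apply tsum_congr; intro t
              rcases eq_or_ne t.1 0 with h | h <;> simp [h]
          _ = 1 := matpow_row_sum hpt M (k, i)
      have hιval : (∑' t : S d, matpow pt M (k, i) t * (if t.1 = 0 then (1 : ℝ) else 0))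
          = ∑ j : Fin d, matpow pt M (k, i) (0, j) := matpow_ind_sum hpt M (k, i)
      have hχval : (∑' t : S d, matpow pt M (k, i) t * (if t.1 = 0 then (0 : ℝ) else 1))
          = 1 - ∑ j : Fin d, matpow pt M (k, i) (0, j) := by
        rw [← hιval]; linarith
      have hrk0 : 0 ≤ ∑ j : Fin d, matpow pt M (k, i) (0, j) :=
        Finset.sum_nonneg fun j _ => matpow_nonneg hpt M _ _
      have hdriftk := hdrift (k, i)
      have hLHS : (∑' t : S d, matpow pt M (k, i) t * (if t.1 = 0 then v t else v t + B))
          = (∑' t : S d, matpow pt M (k, i) t * v t)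
            + B * (1 - ∑ j : Fin d, matpow pt M (k, i) (0, j)) := by
        calc (∑' t : S d, matpow pt M (k, i) t * (if t.1 = 0 then v t else v t + B))
            = ∑' t : S d, (matpow pt M (k, i) t * v t
                + B * (matpow pt M (k, i) t * (if t.1 = 0 then (0 : ℝ) else 1))) := by
              apply tsum_congr; intro t
              rcases eq_or_ne t.1 0 with h | h <;> simp [h] <;> ring
          _ = (∑' t : S d, matpow pt M (k, i) t * v t)
              + ∑' t : S d, B * (matpow pt M (k, i) t * (if t.1 = 0 then (0 : ℝ) else 1)) :=
              Summable.tsum_add hsum (hSχ.mul_left B)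
          _ = (∑' t : S d, matpow pt M (k, i) t * v t)
              + B * (1 - ∑ j : Fin d, matpow pt M (k, i) (0, j)) := by
              rw [tsum_mul_left, hχval]
      rw [hLHS]
      rcases Nat.eq_zero_or_pos k with hk | hk
      · subst hk
        simp only [show ((0, i) : S d).1 = 0 from rfl, if_pos rfl, Nat.zero_le K,
          if_true] at hdriftk ⊢
        have hBr : 0 ≤ B * ∑ j : Fin d, matpow pt M (0, i) (0, j) :=
          mul_nonneg hB.le hrk0
        linarith
      · have hkne : ¬ k = 0 := Nat.pos_iff_ne_zero.mp hk
        simp only [show ((k, i) : S d).1 = k from rfl, if_neg hkne] at hdriftk ⊢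
        by_cases hkK : k ≤ K
        · rw [if_pos hkK] at hdriftk
          have hlev : (∑ j : Fin d, matpow pt M (K, i) (0, j))
              ≤ ∑ j : Fin d, matpow pt M (k, i) (0, j) := level0_le hpt hbm M k K hkK i
          have hble : b ≤ B * ∑ j : Fin d, matpow pt M (k, i) (0, j) :=
            le_trans (hBb i) (mul_le_mul_of_nonneg_left hlev hB.le)
          linarith
        · rw [if_neg hkK] at hdriftk
          have hBr : 0 ≤ B * ∑ j : Fin d, matpow pt M (k, i) (0, j) :=
            mul_nonneg hB.le hrk0
          linarith
    · -- non-summable case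
      have hz1 : (∑' t : S d, matpow pt M (k, i) t * v t) = 0 :=
        tsum_eq_zero_of_not_summable hsum
      have hdriftk := hdrift (k, i)
      rw [hz1] at hdriftk
      have hns : ¬ Summable (fun t : S d =>
          matpow pt M (k, i) t * (if t.1 = 0 then v t else v t + B)) := by
        intro hS
        apply hsum
        apply Summable.of_nonneg_of_le _ _ hS
        · intro t; exact mul_nonneg (hmnn t) (by linarith [hv1 t])
        · intro t
          rcases eq_or_ne t.1 0 with h | h
          · simp [h]
          · simp only [if_neg h]
            exact mul_le_mul_of_nonneg_left (by linarith) (hmnn t)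
      rw [tsum_eq_zero_of_not_summable hns]
      rcases Nat.eq_zero_or_pos k with hk | hk
      · subst hk
        simp only [show ((0, i) : S d).1 = 0 from rfl, if_pos rfl, Nat.zero_le K,
          if_true] at hdriftk ⊢
        linarith
      · have hkne : ¬ k = 0 := Nat.pos_iff_ne_zero.mp hk
        simp only [show ((k, i) : S d).1 = k from rfl, if_neg hkne] at hdriftk ⊢
        by_cases hkK : k ≤ K
        · rw [if_pos hkK] at hdriftk
          linarith
        · rw [if_neg hkK] at hdriftk
          linarith


end MasuTrunc
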